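/- (Theorem 1) Let μ be a probability measure on ℝ^{n_x} × ℝ and consider a finite family of n_F candidate estimator pairs {(T_j, σ̂_j)}_{j=1}^{n_F}, where each T_j : ℝ^{n_x} → ℝ is measurable and each σ̂_j : ℝ^{n_x} → (0,∞) is measurable and strictly positive. Let ε ∈ (0,1), δ ∈ (0,1), and let integers r ≥ 1 and N ≥ r satisfy B(r−1; N, ε) ≤ δ/n_F. If (x₁,y₁), …, (x_N,y_N) are drawn i.i.d. from μ and γ̄_j = rmax_r{ |y_i − T_j(x_i)| / σ̂_j(x_i) }_{i=1}^N for each j = 1,…,n_F, then with probability no smaller than 1−δ over the multisample drawn from the product measure μ^N, simultaneously for every j ∈ {1,…,n_F}: μ{ (x,y) : |y − T_j(x)| > γ̄_j · σ̂_j(x) } ≤ ε. -/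

import Mathlib

open MeasureTheory Filter Topology

/-- Binomial cumulative distribution function `B(k; N, ε)`,
with the convention that it is `0` for `k < 0`. -/
noncomputable def binomCdf (k : ℤ) (N : ℕ) (ε : ℝ) : ℝ :=
  ∑ i ∈ Finset.range (N + 1),
    if (i : ℤ) ≤ k then (N.choose i : ℝ) * ε ^ i * (1 - ε) ^ (N - i) else 0

/-- The `r`-th largest value of the collection `{q i}_{i=1}^N`
(the element at position `r` in decreasing order, counted with multiplicity). -/
noncomputable def rmax {N : ℕ} (r : ℕ) (q : Fin N → ℝ) : ℝ :=
  ((List.ofFn q).insertionSort (· ≤ ·)).getD (N - r) 0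


open Classical in
lemma binom_measure {α : Type*} [MeasurableSpace α] (ν : Measure α) [IsProbabilityMeasure ν]
    (E : Set α) (hE : MeasurableSet E) (N k : ℕ) :
    (Measure.pi fun _ : Fin N => ν)
      {w : Fin N → α | (Finset.univ.filter fun i => w i ∈ E).card ≤ k}
      = ∑ m ∈ Finset.range (N + 1),
          if m ≤ k then (N.choose m : ENNReal) * ν E ^ m * ν Eᶜ ^ (N - m) else 0 := by
  classical
  set C : Finset (Fin N) → Set (Fin N → α) :=
    fun s => Set.pi Set.univ (fun i => if i ∈ s then E else Eᶜ) with hC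
  have hmem : ∀ (s : Finset (Fin N)) (w : Fin N → α),
      w ∈ C s ↔ (Finset.univ.filter fun i => w i ∈ E) = s := by
    intro s w
    simp only [hC, Set.mem_pi, Set.mem_univ, forall_true_left]
    constructor
    · intro h
      ext i
      simp only [Finset.mem_filter, Finset.mem_univ, true_and]
      constructor
      · intro hw
        by_contra hi
        have := h i; rw [if_neg hi] at this; exact this hw
      · intro hi
        have := h i; rwa [if_pos hi] at this
    · intro h i
      by_cases hi : i ∈ s
      · rw [if_pos hi]
        have : i ∈ Finset.univ.filter fun i => w i ∈ E := h ▸ hi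
        simpa using this
      · rw [if_neg hi]
        intro hw
        exact hi (h ▸ (by simpa using hw : i ∈ Finset.univ.filter fun i => w i ∈ E))
  set A : Finset (Finset (Fin N)) :=
    Finset.univ.powerset.filter (fun s => s.card ≤ k) with hA
  have hset : {w : Fin N → α | (Finset.univ.filter fun i => w i ∈ E).card ≤ k}
      = ⋃ s ∈ A, C s := by
    ext w
    simp only [Set.mem_setOf_eq, Set.mem_iUnion, hA, Finset.mem_filter, Finset.mem_powerset]
    constructor
    · intro h
      exact ⟨Finset.univ.filter fun i => w i ∈ E, ⟨Finset.filter_subset _ _, h⟩,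
        (hmem _ _).2 rfl⟩
    · rintro ⟨s, ⟨-, hs⟩, hw⟩
      rw [(hmem _ _).1 hw]; exact hs
  have hCmeas : ∀ s, MeasurableSet (C s) := by
    intro s
    apply MeasurableSet.univ_pi
    intro i
    by_cases hi : i ∈ s
    · rw [if_pos hi]; exact hE
    · rw [if_neg hi]; exact hE.compl
  have hdisj : (A : Set (Finset (Fin N))).PairwiseDisjoint C := by
    intro s _ t _ hst
    rw [Function.onFun, Set.disjoint_left]
    intro w hws hwt
    exact hst (((hmem s w).1 hws).symm.trans ((hmem t w).1 hwt))
  have hCval : ∀ s : Finset (Fin N),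
      (Measure.pi fun _ : Fin N => ν) (C s) = ν E ^ s.card * ν Eᶜ ^ (N - s.card) := by
    intro s
    rw [hC, Measure.pi_pi]
    rw [← Finset.prod_filter_mul_prod_filter_not Finset.univ (· ∈ s)]
    have h1 : ∀ i ∈ Finset.univ.filter (· ∈ s), ν (if i ∈ s then E else Eᶜ) = ν E := by
      intro i hi; rw [if_pos (Finset.mem_filter.1 hi).2]
    have h2 : ∀ i ∈ Finset.univ.filter (¬ · ∈ s), ν (if i ∈ s then E else Eᶜ) = ν Eᶜ := by
      intro i hi; rw [if_neg (Finset.mem_filter.1 hi).2]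
    rw [Finset.prod_congr rfl h1, Finset.prod_congr rfl h2, Finset.prod_const,
      Finset.prod_const]
    congr 2
    · rw [Finset.filter_univ_mem]
    · have : Finset.univ.filter (¬ · ∈ s) = sᶜ := by
        ext i; simp [Finset.mem_compl]
      rw [this, Finset.card_compl, Fintype.card_fin]
  rw [hset, measure_biUnion_finset hdisj (fun s _ => hCmeas s)]
  have : ∀ s ∈ A, (Measure.pi fun _ : Fin N => ν) (C s)
      = ν E ^ s.card * ν Eᶜ ^ (N - s.card) := fun s _ => hCval s
  rw [Finset.sum_congr rfl this, hA, Finset.sum_filter]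
  rw [Finset.powerset_card_disjiUnion]
  refine (Finset.sum_disjiUnion _ _ _).trans ?_
  apply Finset.sum_congr (by rw [Finset.card_univ, Fintype.card_fin])
  intro m hm
  have hcard : ∀ s ∈ Finset.powersetCard m (Finset.univ : Finset (Fin N)), s.card = m :=
    fun s hs => (Finset.mem_powersetCard.1 hs).2
  calc ∑ s ∈ Finset.powersetCard m Finset.univ,
        (if s.card ≤ k then ν E ^ s.card * ν Eᶜ ^ (N - s.card) else 0)
      = ∑ _s ∈ Finset.powersetCard m Finset.univ,
        (if m ≤ k then ν E ^ m * ν Eᶜ ^ (N - m) else 0) := by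
        apply Finset.sum_congr rfl; intro s hs; rw [hcard s hs]
    _ = (if m ≤ k then (N.choose m : ENNReal) * ν E ^ m * ν Eᶜ ^ (N - m) else 0) := by
        rw [Finset.sum_const, Finset.card_powersetCard, Finset.card_univ, Fintype.card_fin]
        split
        · rw [nsmul_eq_mul, mul_assoc]
        · rw [smul_zero]


open Classical in
lemma binom_measure' {α : Type*} [MeasurableSpace α] (ν : Measure α) [IsProbabilityMeasure ν]
    (E : Set α) (hE : MeasurableSet E) (N k : ℕ) :
    (Measure.pi fun _ : Fin N => ν)
      {w : Fin N → α | (Finset.univ.filter fun i => w i ∈ E).card ≤ k}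
      = ENNReal.ofReal (binomCdf (k : ℤ) N (ν E).toReal) := by
  rw [binom_measure ν E hE N k, binomCdf]
  have hle : ν E ≤ 1 := prob_le_one
  have hne : ν E ≠ ⊤ := (lt_of_le_of_lt hle ENNReal.one_lt_top).ne
  set x : ℝ := (ν E).toReal with hx
  have hx0 : 0 ≤ x := ENNReal.toReal_nonneg
  have hx1 : x ≤ 1 := by
    rw [← ENNReal.toReal_one]; exact ENNReal.toReal_mono ENNReal.one_ne_top hle
  have hEc : ν Eᶜ = ENNReal.ofReal (1 - x) := by
    rw [measure_compl hE hne, measure_univ, ENNReal.ofReal_sub _ hx0, ENNReal.ofReal_one,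
      hx, ENNReal.ofReal_toReal hne]
  rw [ENNReal.ofReal_sum_of_nonneg]
  · apply Finset.sum_congr rfl
    intro m _
    simp only [Nat.cast_le]
    split
    · rw [ENNReal.ofReal_mul (by positivity), ENNReal.ofReal_mul (Nat.cast_nonneg _),
        ENNReal.ofReal_pow hx0, ENNReal.ofReal_pow (by linarith), ENNReal.ofReal_natCast,
        ENNReal.ofReal_toReal hne, ← hEc]
    · rw [ENNReal.ofReal_zero]
  · intro m _
    split
    · exact mul_nonneg (mul_nonneg (Nat.cast_nonneg _) (pow_nonneg hx0 _)) (pow_nonneg (by linarith) _)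
    · exact le_rfl

-- uniform measure antitonicity
lemma binomCdf_anti (N k : ℕ) (a b : ℝ) (h0 : 0 ≤ a) (hab : a ≤ b) (hb1 : b ≤ 1) :
    ENNReal.ofReal (binomCdf (k : ℤ) N b) ≤ ENNReal.ofReal (binomCdf (k : ℤ) N a) := by
  classical
  set ν : Measure ℝ := volume.restrict (Set.Ioc (0:ℝ) 1) with hν
  haveI : IsProbabilityMeasure ν := ⟨by
    rw [hν, Measure.restrict_apply_univ, Real.volume_Ioc]; norm_num⟩
  have hval : ∀ t : ℝ, 0 ≤ t → t ≤ 1 → ν (Set.Ioc 0 t) = ENNReal.ofReal t := by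
    intro t ht0 ht1
    rw [hν, Measure.restrict_apply measurableSet_Ioc]
    have : Set.Ioc (0:ℝ) t ∩ Set.Ioc 0 1 = Set.Ioc 0 t := by
      rw [Set.Ioc_inter_Ioc]
      simp [max_self, min_eq_left ht1]
    rw [this, Real.volume_Ioc, sub_zero]
  have hta : (ν (Set.Ioc 0 a)).toReal = a := by
    rw [hval a h0 (hab.trans hb1), ENNReal.toReal_ofReal h0]
  have htb : (ν (Set.Ioc 0 b)).toReal = b := by
    rw [hval b (h0.trans hab) hb1, ENNReal.toReal_ofReal (h0.trans hab)]
  rw [← hta, ← htb, ← binom_measure' ν _ measurableSet_Ioc N k,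
    ← binom_measure' ν _ measurableSet_Ioc N k]
  apply measure_mono
  intro w hw
  simp only [Set.mem_setOf_eq] at hw ⊢
  refine le_trans (Finset.card_le_card ?_) hw
  intro i hi
  simp only [Finset.mem_filter, Finset.mem_univ, true_and] at hi ⊢
  exact Set.Ioc_subset_Ioc_right hab hi


open Classical in
lemma rmax_count {N : ℕ} (r : ℕ) (hr : 1 ≤ r) (hrN : r ≤ N) (q : Fin N → ℝ) :
    (Finset.univ.filter fun i => rmax r q < q i).card ≤ r - 1 := by
  classical
  set L := (List.ofFn q).insertionSort (· ≤ ·) with hL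
  have hlen : L.length = N := by rw [hL, List.length_insertionSort, List.length_ofFn]
  have hsort : L.Pairwise (· ≤ ·) := List.pairwise_insertionSort _ _
  have hNr : N - r < L.length := by omega
  set a := rmax r q with ha
  have ha' : a = L[N - r] := by
    rw [ha, rmax, ← hL, List.getD_eq_getElem _ _ hNr]
  have hcount : (Finset.univ.filter fun i => a < q i).card
      = L.countP (fun x => decide (a < x)) := by
    have e1 : (Finset.univ.filter fun i => a < q i).card
        = Multiset.countP (fun x => a < x) (Finset.univ.val.map q) := by
      rw [Multiset.countP_map]
      rfl
    rw [e1, Fin.univ_val_map]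
    have : (List.ofFn q : Multiset ℝ).countP (fun x => a < x)
        = (List.ofFn q).countP (fun x => decide (a < x)) := rfl
    rw [this]
    exact ((List.perm_insertionSort (· ≤ ·) (List.ofFn q)).countP_eq _).symm
  rw [hcount]
  have hsplit : L.countP (fun x => decide (a < x))
      = (L.take (N - r + 1)).countP (fun x => decide (a < x))
        + (L.drop (N - r + 1)).countP (fun x => decide (a < x)) := by
    conv_lhs => rw [← List.take_append_drop (N - r + 1) L]
    rw [List.countP_append]
  rw [hsplit]
  have h1 : (L.take (N - r + 1)).countP (fun x => decide (a < x)) = 0 := by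
    rw [List.countP_eq_zero]
    intro x hx
    rw [List.mem_take_iff_getElem] at hx
    obtain ⟨i, hi, hx⟩ := hx
    have hile : i ≤ N - r := by omega
    have : L[i]'(by omega) ≤ L[N - r] := by
      have := hsort.rel_get_of_le (a := ⟨i, by omega⟩) (b := ⟨N - r, hNr⟩)
        (by simpa using hile)
      simpa using this
    simp only [decide_eq_true_eq, ha']
    exact not_lt.2 (hx ▸ this)
  have h2 : (L.drop (N - r + 1)).countP (fun x => decide (a < x)) ≤ r - 1 := by
    refine le_trans List.countP_le_length ?_
    rw [List.length_drop]
    omega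
  omega


lemma key_lemma {α : Type*} [MeasurableSpace α] (μ : Measure α) [IsProbabilityMeasure μ]
    (ρ : α → ℝ) (hρ : Measurable ρ) (hρ0 : ∀ p, 0 ≤ ρ p)
    (ε c : ℝ) (hε : ε ∈ Set.Ioo (0:ℝ) 1) (r N : ℕ) (hr : 1 ≤ r) (hrN : r ≤ N)
    (hB : ENNReal.ofReal (binomCdf ((r : ℤ) - 1) N ε) ≤ ENNReal.ofReal c) :
    (Measure.pi fun _ : Fin N => μ)
      {w : Fin N → α | ¬ μ {p | rmax r (fun i => ρ (w i)) < ρ p} ≤ ENNReal.ofReal ε}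
      ≤ ENNReal.ofReal c := by
  classical
  set g : ℝ → Set α := fun t => {p | t < ρ p} with hgdef
  have hganti : ∀ {t t' : ℝ}, t ≤ t' → g t' ⊆ g t := by
    intro t t' h p hp
    exact lt_of_le_of_lt h hp
  have hg : ∀ t, MeasurableSet (g t) := fun t => measurableSet_lt measurable_const hρ
  set S : Set ℝ := {t | μ (g t) ≤ ENNReal.ofReal ε} with hSdef
  have hSne : S.Nonempty := by
    have hempty : ⋂ n : ℕ, g n = ∅ := by
      rw [Set.eq_empty_iff_forall_notMem]
      intro p hp
      rw [Set.mem_iInter] at hp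
      obtain ⟨n, hn⟩ := exists_nat_gt (ρ p)
      exact absurd (hp n) (not_lt.2 hn.le)
    have h0 : Tendsto (fun n : ℕ => μ (g n)) atTop (𝓝 0) := by
      have := tendsto_measure_iInter_atTop (μ := μ) (s := fun n : ℕ => g n)
        (fun n => (hg _).nullMeasurableSet)
        (fun n m hnm => hganti (by exact_mod_cast hnm)) ⟨0, measure_ne_top μ _⟩
      rwa [hempty, measure_empty] at this
    have := h0.eventually_lt_const (ENNReal.ofReal_pos.2 hε.1)
    obtain ⟨n, hn⟩ := this.exists
    exact ⟨n, hn.le⟩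
  have hSbdd : BddBelow S := by
    refine ⟨0, fun t ht => ?_⟩
    by_contra hlt
    push_neg at hlt
    have huniv : g t = Set.univ := by
      ext p; simp only [hgdef, Set.mem_setOf_eq, Set.mem_univ, iff_true]
      exact lt_of_lt_of_le hlt (hρ0 p)
    rw [hSdef, Set.mem_setOf_eq, huniv, measure_univ] at ht
    exact absurd ht (not_le.2 (ENNReal.ofReal_lt_one.2 hε.2))
  set tstar := sInf S with htstar
  have hstar : μ (g tstar) ≤ ENNReal.ofReal ε := by
    have hU : g tstar = ⋃ n : ℕ, g (tstar + 1 / (n + 1)) := by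
      ext p
      simp only [hgdef, Set.mem_setOf_eq, Set.mem_iUnion]
      constructor
      · intro h
        obtain ⟨n, hn⟩ := exists_nat_one_div_lt (sub_pos.2 h)
        exact ⟨n, by push_cast at hn ⊢; linarith⟩
      · rintro ⟨n, hn⟩
        have : (0:ℝ) < 1 / (n + 1) := by positivity
        linarith
    have hmono : Monotone fun n : ℕ => g (tstar + 1 / (n + 1)) := by
      intro n m hnm
      apply hganti
      have : (1:ℝ) / (m + 1) ≤ 1 / (n + 1) := by
        apply one_div_le_one_div_of_le (by positivity)
        push_cast; linarith [(Nat.cast_le (α := ℝ)).2 hnm]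
      linarith
    rw [hU, hmono.measure_iUnion]
    apply iSup_le
    intro n
    have hlt : tstar < tstar + 1 / (n + 1) := by
      have : (0:ℝ) < 1 / (n + 1) := by positivity
      linarith
    obtain ⟨t, htS, htlt⟩ := (csInf_lt_iff hSbdd hSne).1 (htstar ▸ hlt)
    exact le_trans (measure_mono (hganti htlt.le)) htS
  set E' : Set α := {p | tstar ≤ ρ p} with hE'def
  have hE'm : MeasurableSet E' := measurableSet_le measurable_const hρ
  have hE'ε : ENNReal.ofReal ε ≤ μ E' := by
    have hI : E' = ⋂ n : ℕ, g (tstar - 1 / (n + 1)) := by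
      ext p
      simp only [hE'def, hgdef, Set.mem_setOf_eq, Set.mem_iInter]
      constructor
      · intro h n
        have : (0:ℝ) < 1 / (n + 1) := by positivity
        linarith
      · intro h
        by_contra hc
        push_neg at hc
        obtain ⟨n, hn⟩ := exists_nat_one_div_lt (sub_pos.2 hc)
        have := h n
        linarith
    have hanti : Antitone fun n : ℕ => g (tstar - 1 / (n + 1)) := by
      intro n m hnm
      apply hganti
      have : (1:ℝ) / (m + 1) ≤ 1 / (n + 1) := by
        apply one_div_le_one_div_of_le (by positivity)
        push_cast; linarith [(Nat.cast_le (α := ℝ)).2 hnm]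
      linarith
    rw [hI, hanti.measure_iInter (fun n => (hg _).nullMeasurableSet) ⟨0, measure_ne_top μ _⟩]
    refine le_iInf fun n => ?_
    have hlt : tstar - 1 / (n + 1) < tstar := by
      have : (0:ℝ) < 1 / (n + 1) := by positivity
      linarith
    have hnot : tstar - 1 / (n + 1) ∉ S := fun hmem => absurd (csInf_le hSbdd hmem) (not_le.2 hlt)
    exact (not_le.1 hnot).le
  -- inclusion into the binomial event
  have hsub : {w : Fin N → α | ¬ μ {p | rmax r (fun i => ρ (w i)) < ρ p} ≤ ENNReal.ofReal ε}
      ⊆ {w : Fin N → α | (Finset.univ.filter fun i => w i ∈ E').card ≤ r - 1} := by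
    intro w hw
    simp only [Set.mem_setOf_eq] at hw ⊢
    have hglt : ¬ μ (g (rmax r (fun i => ρ (w i)))) ≤ ENNReal.ofReal ε := hw
    have hlt : rmax r (fun i => ρ (w i)) < tstar := by
      by_contra h
      push_neg at h
      exact hglt (le_trans (measure_mono (hganti h)) hstar)
    refine le_trans (Finset.card_le_card ?_) (rmax_count r hr hrN (fun i => ρ (w i)))
    intro i hi
    simp only [Finset.mem_filter, Finset.mem_univ, true_and, hE'def, Set.mem_setOf_eq] at hi ⊢
    exact lt_of_lt_of_le hlt hi
  refine le_trans (measure_mono hsub) ?_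
  rw [binom_measure' μ E' hE'm N (r - 1)]
  have hcast : ((r - 1 : ℕ) : ℤ) = (r : ℤ) - 1 := by omega
  have hx1 : (μ E').toReal ≤ 1 := by
    rw [← ENNReal.toReal_one]
    exact ENNReal.toReal_mono ENNReal.one_ne_top prob_le_one
  have hεx : ε ≤ (μ E').toReal := by
    have := ENNReal.toReal_mono (measure_ne_top μ E') hE'ε
    rwa [ENNReal.toReal_ofReal hε.1.le] at this
  refine le_trans (binomCdf_anti N (r - 1) ε _ hε.1.le hεx hx1) ?_
  rwa [hcast]
theorem stmt9 (nx nF : ℕ) (μ : Measure ((Fin nx → ℝ) × ℝ)) [IsProbabilityMeasure μ]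
    (T : Fin nF → (Fin nx → ℝ) → ℝ) (hT : ∀ j, Measurable (T j))
    (σhat : Fin nF → (Fin nx → ℝ) → ℝ) (hσm : ∀ j, Measurable (σhat j))
    (hσpos : ∀ j x, 0 < σhat j x)
    (ε δ : ℝ) (hε : ε ∈ Set.Ioo (0 : ℝ) 1) (hδ : δ ∈ Set.Ioo (0 : ℝ) 1)
    (r N : ℕ) (hr : 1 ≤ r) (hrN : r ≤ N)
    (hB : binomCdf ((r : ℤ) - 1) N ε ≤ δ / (nF : ℝ)) :
    ENNReal.ofReal (1 - δ) ≤
      (Measure.pi fun _ : Fin N => μ)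
        {w : Fin N → (Fin nx → ℝ) × ℝ |
          ∀ j : Fin nF,
            μ {p : (Fin nx → ℝ) × ℝ |
                rmax r (fun i => |(w i).2 - T j (w i).1| / σhat j (w i).1) *
                    σhat j p.1 < |p.2 - T j p.1|} ≤
              ENNReal.ofReal ε} := by
  classical
  set P := Measure.pi fun _ : Fin N => μ with hP
  set Good : Set (Fin N → (Fin nx → ℝ) × ℝ) :=
    {w | ∀ j : Fin nF,
      μ {p : (Fin nx → ℝ) × ℝ |
          rmax r (fun i => |(w i).2 - T j (w i).1| / σhat j (w i).1) * σhat j p.1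
            < |p.2 - T j p.1|} ≤ ENNReal.ofReal ε} with hGood
  by_cases h0 : nF = 0
  · subst h0
    have : Good = Set.univ := by
      rw [Set.eq_univ_iff_forall]
      intro w
      simp only [hGood, Set.mem_setOf_eq]
      intro j
      exact j.elim0
    rw [this, measure_univ]
    exact ENNReal.ofReal_le_one.2 (by linarith [hδ.1])
  -- residual functions
  set ρ : Fin nF → ((Fin nx → ℝ) × ℝ) → ℝ :=
    fun j p => |p.2 - T j p.1| / σhat j p.1 with hρdef
  have hρm : ∀ j, Measurable (ρ j) := by
    intro j
    exact ((measurable_snd.sub ((hT j).comp measurable_fst)).abs).div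
      ((hσm j).comp measurable_fst)
  have hρ0 : ∀ j p, 0 ≤ ρ j p := fun j p =>
    div_nonneg (abs_nonneg _) (hσpos j p.1).le
  have hseteq : ∀ (j : Fin nF) (w : Fin N → (Fin nx → ℝ) × ℝ),
      {p : (Fin nx → ℝ) × ℝ |
        rmax r (fun i => |(w i).2 - T j (w i).1| / σhat j (w i).1) * σhat j p.1
          < |p.2 - T j p.1|}
      = {p : (Fin nx → ℝ) × ℝ | rmax r (fun i => ρ j (w i)) < ρ j p} := by
    intro j w
    ext p
    simp only [Set.mem_setOf_eq, hρdef]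
    rw [lt_div_iff₀ (hσpos j p.1)]
  set Bad : Fin nF → Set (Fin N → (Fin nx → ℝ) × ℝ) :=
    fun j => {w | ¬ μ {p | rmax r (fun i => ρ j (w i)) < ρ j p} ≤ ENNReal.ofReal ε}
    with hBad
  have hGc : Goodᶜ ⊆ ⋃ j, Bad j := by
    intro w hw
    simp only [hGood, Set.mem_compl_iff, Set.mem_setOf_eq, not_forall] at hw
    obtain ⟨j, hj⟩ := hw
    rw [Set.mem_iUnion]
    refine ⟨j, ?_⟩
    simp only [hBad, Set.mem_setOf_eq]
    rw [← hseteq j w]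
    exact hj
  have hBadle : ∀ j, P (Bad j) ≤ ENNReal.ofReal (δ / nF) := by
    intro j
    exact key_lemma μ (ρ j) (hρm j) (hρ0 j) ε (δ / nF) hε r N hr hrN
      (ENNReal.ofReal_le_ofReal hB)
  have hUnion : P (⋃ j, Bad j) ≤ ENNReal.ofReal δ := by
    refine le_trans (measure_iUnion_le _) ?_
    rw [tsum_fintype]
    refine le_trans (Finset.sum_le_sum fun j _ => hBadle j) ?_
    rw [Finset.sum_const, Finset.card_univ, Fintype.card_fin, nsmul_eq_mul,
      ← ENNReal.ofReal_natCast, ← ENNReal.ofReal_mul (Nat.cast_nonneg _),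
      mul_div_cancel₀ δ (Nat.cast_ne_zero.2 h0)]
  have h1 : (1 : ENNReal) ≤ P Good + ENNReal.ofReal δ := by
    calc (1 : ENNReal) = P Set.univ := measure_univ.symm
      _ = P (Good ∪ Goodᶜ) := by rw [Set.union_compl_self]
      _ ≤ P Good + P Goodᶜ := measure_union_le _ _
      _ ≤ P Good + ENNReal.ofReal δ := by
          exact add_le_add_right (le_trans (measure_mono hGc) hUnion) _
  rw [ENNReal.ofReal_sub _ hδ.1.le, ENNReal.ofReal_one]
  exact tsub_le_iff_right.2 h1
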